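/- Let k ≥ 1 and let A = ℤ[t₁^{±1},…,t_{2k}^{±1}] be the Laurent polynomial ring, with the bar involution given by the ring automorphism sending tᵢ ↦ tᵢ⁻¹. Set s := t₁⋯t_{2k} and P := (1−t₁)⋯(1−t_{2k})·(1−s⁻¹). Then for every W ∈ A, the element V := W − W̄ + W·W̄·P satisfies V̄ = −V; in particular the constant coefficient (coefficient of the monomial t⁰ = 1) of V is 0. -/

import Mathlib

/-!
STATEMENT 1: Let k ≥ 1 and A = ℤ[t₁^{±1},…,t_{2k}^{±1}] with the bar involution
tᵢ ↦ tᵢ⁻¹.  Set s := t₁⋯t_{2k} and P := (1−t₁)⋯(1−t_{2k})·(1−s⁻¹).  Then for every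
W ∈ A, V := W − W̄ + W·W̄·P satisfies V̄ = −V; in particular the constant
coefficient of V is 0.

We model A as the group algebra `AddMonoidAlgebra ℤ (Fin (2*k) → ℤ)`:
a monomial t^w corresponds to `Finsupp.single w 1`.  The bar involution is the
ring (algebra) automorphism induced by negation on the exponent group; note that
s⁻¹ is the monomial t^{(-1,…,-1)}.
-/

/-- Laurent polynomials ℤ[t₁^{±1},…,t_n^{±1}]. -/
abbrev Laurent (n : ℕ) := AddMonoidAlgebra ℤ (Fin n → ℤ)

/-- The bar involution tᵢ ↦ tᵢ⁻¹, i.e. the ring automorphism induced by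
negation on exponents. -/
noncomputable def bar (n : ℕ) : Laurent n ≃ₐ[ℤ] Laurent n :=
  AddMonoidAlgebra.domCongr ℤ ℤ (AddEquiv.neg (Fin n → ℤ))

/-- The variable tᵢ. -/
noncomputable def tvar {n : ℕ} (i : Fin n) : Laurent n :=
  AddMonoidAlgebra.single (Pi.single i 1) 1

/-- The monomial s⁻¹ = (t₁⋯t_n)⁻¹ = t₁⁻¹⋯t_n⁻¹. -/
noncomputable def sInv (n : ℕ) : Laurent n := AddMonoidAlgebra.single (fun _ => (-1 : ℤ)) 1

noncomputable def sVar (n : ℕ) : Laurent n := AddMonoidAlgebra.single (fun _ => (1 : ℤ)) 1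

lemma bar_single (n : ℕ) (w : Fin n → ℤ) (c : ℤ) :
    bar n (AddMonoidAlgebra.single w c) = AddMonoidAlgebra.single (-w) c := by
  simp [bar]

lemma bar_bar (n : ℕ) (x : Laurent n) : bar n (bar n x) = x := by
  ext h; simp [bar]

lemma sInv_mul_sVar (n : ℕ) : sInv n * sVar n = 1 := by
  rw [sInv, sVar, AddMonoidAlgebra.single_mul_single]
  have : (fun _ : Fin n => (-1 : ℤ)) + (fun _ => 1) = 0 := by funext i; simp
  rw [this]; simp [AddMonoidAlgebra.one_def]

lemma bar_tvar {n : ℕ} (i : Fin n) :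
    bar n (tvar i) = AddMonoidAlgebra.single (-(Pi.single i 1)) 1 := bar_single n _ _

lemma tvar_mul_bar_tvar {n : ℕ} (i : Fin n) : tvar i * bar n (tvar i) = 1 := by
  rw [bar_tvar, tvar, AddMonoidAlgebra.single_mul_single]
  simp [AddMonoidAlgebra.one_def]

lemma prod_bar_tvar (n : ℕ) : (∏ i, bar n (tvar i)) = sInv n := by
  simp only [bar_tvar]
  rw [AddMonoidAlgebra.prod_single]
  congr 1
  · funext j
    simp [Finset.sum_apply, Pi.single_apply]
  · simp

lemma bar_one_sub_tvar {n : ℕ} (i : Fin n) :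
    1 - bar n (tvar i) = bar n (tvar i) * (tvar i - 1) := by
  rw [mul_sub, mul_one, mul_comm, tvar_mul_bar_tvar]

lemma bar_sInv (n : ℕ) : bar n (sInv n) = sVar n := by
  rw [sInv, bar_single]
  congr 1

lemma sVar_eq (n : ℕ) : 1 - sVar n = -(sVar n * (1 - sInv n)) := by
  rw [mul_sub, mul_one, mul_comm, sInv_mul_sVar]; ring

lemma bar_P (k : ℕ) :
    bar (2*k) ((∏ i, (1 - tvar i)) * (1 - sInv (2*k)))
      = -((∏ i, (1 - tvar i)) * (1 - sInv (2*k))) := by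
  set n := 2*k with hn
  rw [map_mul, map_prod]
  have h1 : (∏ i, bar n (1 - tvar i)) = sInv n * ∏ i, (tvar i - 1) := by
    simp only [map_sub, map_one, bar_one_sub_tvar]
    rw [Finset.prod_mul_distrib, prod_bar_tvar]
  have h2 : (∏ i : Fin n, (tvar i - 1)) = ∏ i, (1 - tvar i) := by
    have he : ∀ i : Fin n, tvar i - 1 = (-1) * (1 - tvar i) := fun i => by ring
    simp only [he]
    rw [Finset.prod_mul_distrib, Finset.prod_const, Finset.card_univ, Fintype.card_fin]
    have : ((-1 : Laurent n)) ^ n = 1 := by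
      rw [hn, pow_mul]; norm_num
    rw [this, one_mul]
  have h3 : bar n (1 - sInv n) = 1 - sVar n := by
    rw [map_sub, map_one, bar_sInv]
  rw [h1, h2, h3, sVar_eq]
  have hs := sInv_mul_sVar n
  linear_combination (-(∏ i : Fin n, (1 - tvar i)) * (1 - sInv n)) * hs

theorem stmt_1 (k : ℕ) (hk : 1 ≤ k) (W V : Laurent (2*k))
    (hV : V = W - bar _ W + W * bar _ W *
      ((∏ i, (1 - tvar i)) * (1 - sInv (2*k)))) :
    bar _ V = -V ∧ (V.coeff : (Fin (2*k) → ℤ) →₀ ℤ) 0 = 0 := by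
  have hmain : bar (2*k) V = -V := by
    rw [hV]
    rw [map_add, map_sub, map_mul, map_mul, bar_bar, bar_P]
    ring
  refine ⟨hmain, ?_⟩
  have h0 : (bar (2*k) V).coeff 0 = V.coeff 0 := by
    simp [bar]
  rw [hmain, AddMonoidAlgebra.coeff_neg] at h0
  change -(V.coeff 0) = V.coeff 0 at h0
  omega
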